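/- Define G'(−1) = I and G'(t) = (I + Ω₁(t)G)·G'(t−1) for t ≥ 0, and let e denote the all-ones vector in ℝ^{n₁}. Then for all t ≥ 0, every entry of the vector G·G'(t)·e is nonpositive. -/

import Mathlib

open Matrix

lemma step_nonpos {n₁ : ℕ} (G : Matrix (Fin n₁) (Fin n₁) ℝ)
    (hoff : ∀ i j, i ≠ j → 0 ≤ G i j)
    (hdiag : ∀ i, G i i ∈ Set.Icc (-1 : ℝ) 0)
    (w : Fin n₁ → ℝ) (hw : ∀ i, w i ∈ Set.Icc (0 : ℝ) 1)
    (v : Fin n₁ → ℝ) (hv : ∀ i, (G *ᵥ v) i ≤ 0) :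
    ∀ i, (G *ᵥ ((1 + Matrix.diagonal w * G) *ᵥ v)) i ≤ 0 := by
  intro i
  set u : Fin n₁ → ℝ := G *ᵥ v with hu
  have hd : (1 + Matrix.diagonal w * G) *ᵥ v = v + fun j => w j * u j := by
    rw [Matrix.add_mulVec, Matrix.one_mulVec, ← Matrix.mulVec_mulVec]
    ext j
    simp only [Pi.add_apply, Matrix.mulVec_diagonal, hu]
  rw [hd, Matrix.mulVec_add]
  have hGd : (G *ᵥ fun j => w j * u j) i = ∑ j, G i j * (w j * u j) := by
    simp [Matrix.mulVec, dotProduct]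
  have hsum : ∑ j ∈ Finset.univ.erase i, G i j * (w j * u j) ≤ 0 := by
    apply Finset.sum_nonpos
    intro j hj
    have hji : j ≠ i := Finset.ne_of_mem_erase hj
    have h1 : 0 ≤ G i j := hoff i j (Ne.symm hji)
    have h2 : 0 ≤ w j := (hw j).1
    have h3 : u j ≤ 0 := hv j
    nlinarith [mul_nonneg h1 h2]
  have hdiagterm : u i + G i i * (w i * u i) ≤ 0 := by
    have h1 : 0 ≤ 1 + G i i * w i := by
      nlinarith [(hdiag i).1, (hdiag i).2, (hw i).1, (hw i).2]
    nlinarith [hv i]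
  have hsplit : ∑ j, G i j * (w j * u j)
      = G i i * (w i * u i) + ∑ j ∈ Finset.univ.erase i, G i j * (w j * u j) :=
    (Finset.add_sum_erase _ _ (Finset.mem_univ i)).symm
  have : (G *ᵥ v + G *ᵥ fun j => w j * u j) i
      = u i + ∑ j, G i j * (w j * u j) := by
    rw [Pi.add_apply, hGd, hu]
  rw [this, hsplit]
  linarith

/-- For `G'(-1) = I`, `G'(t) = (I + Ω₁(t)G) G'(t-1)`, every entry of
`G ⬝ G'(t) ⬝ e` is nonpositive, where `e` is the all-ones vector. -/
theorem G_mul_Gprime_ones_nonpos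
    (n₁ : ℕ) (hn₁ : 0 < n₁)
    (G : Matrix (Fin n₁) (Fin n₁) ℝ)
    (hoff : ∀ i j, i ≠ j → 0 ≤ G i j)
    (hdiag : ∀ i, G i i ∈ Set.Icc (-1 : ℝ) 0)
    (hrow : ∀ i, (G *ᵥ fun _ => (1 : ℝ)) i ≤ 0)
    (w : ℕ → Fin n₁ → ℝ) (hw : ∀ t i, w t i ∈ Set.Icc (0 : ℝ) 1)
    (G' : ℕ → Matrix (Fin n₁) (Fin n₁) ℝ)
    (hG0 : G' 0 = (1 + Matrix.diagonal (w 0) * G) * 1)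
    (hGrec : ∀ t, G' (t + 1) = (1 + Matrix.diagonal (w (t + 1)) * G) * G' t) :
    ∀ (t : ℕ) (i : Fin n₁), (G *ᵥ (G' t *ᵥ fun _ => (1 : ℝ))) i ≤ 0 := by
  intro t
  induction t with
  | zero =>
      rw [hG0, mul_one]
      exact step_nonpos G hoff hdiag (w 0) (hw 0) _ hrow
  | succ t ih =>
      rw [hGrec t, ← Matrix.mulVec_mulVec]
      exact step_nonpos G hoff hdiag (w (t + 1)) (hw (t + 1)) _ ih
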